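/- Fix a real γ > 2. Then lim_{N→∞} d̂_N(γ) / N^{1/(γ−1)} = ((γ−1)·ζ(γ))^{−1/(γ−1)}, where ζ is the Riemann zeta function; in particular lim_{N→∞} d̂_N(γ)/N = 0, i.e., the expected maximum degree grows sublinearly in N. -/

import Mathlib

open Filter

/-- The generalized harmonic number `H_{a,b} = ∑_{t=1}^{a} t^{-b}`. -/
noncomputable def Hgen (a : ℕ) (b : ℝ) : ℝ := ∑ t ∈ Finset.Icc 1 a, (t : ℝ) ^ (-b)

/-- The expected maximum degree of a power-law degree sequence with exponent `γ` on
`N` nodes: `d̂_N(γ) = max { x ∈ {1,…,N-1} : N · ∑_{k=x}^{N-1} k^{-γ} ≥ H_{N-1,γ} }`. -/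
noncomputable def dhat (N : ℕ) (γ : ℝ) : ℕ :=
  sSup {x : ℕ | 1 ≤ x ∧ x ≤ N - 1 ∧
    Hgen (N - 1) γ ≤ (N : ℝ) * ∑ k ∈ Finset.Icc x (N - 1), (k : ℝ) ^ (-γ)}

lemma hsummable {γ : ℝ} (hγ : 1 < γ) : Summable (fun n : ℕ => (n : ℝ) ^ (-γ)) :=
  Real.summable_nat_rpow.2 (by linarith)

lemma zeta_re_eq {γ : ℝ} (hγ : 1 < γ) :
    (riemannZeta γ).re = ∑' n : ℕ, (n : ℝ) ^ (-γ) := by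
  have h1 : riemannZeta (γ : ℂ) = ∑' n : ℕ, 1 / (n : ℂ) ^ (γ : ℂ) :=
    zeta_eq_tsum_one_div_nat_cpow (by simpa using hγ)
  have h2 : ∀ n : ℕ, (1 / (n : ℂ) ^ (γ : ℂ)) = (((n : ℝ) ^ (-γ) : ℝ) : ℂ) := by
    intro n
    rw [Real.rpow_neg (Nat.cast_nonneg n), Complex.ofReal_inv,
      Complex.ofReal_cpow (Nat.cast_nonneg n), one_div]
    norm_num
  rw [h1, tsum_congr h2, ← Complex.ofReal_tsum, Complex.ofReal_re]

/-- Antitonicity of `t ↦ t ^ (-γ)` on a set of positive reals. -/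
lemma rpow_neg_antitoneOn {γ : ℝ} (hγ : 0 < γ) {s : Set ℝ} (hs : ∀ x ∈ s, (0:ℝ) < x) :
    AntitoneOn (fun t : ℝ => t ^ (-γ)) s := fun u hu v _ huv =>
  Real.rpow_le_rpow_of_nonpos (hs u hu) huv (by linarith)

/-- Lower integral bound for the tail sum. -/
lemma tail_lower {γ : ℝ} (hγ : 1 < γ) {x m : ℕ} (hx : 1 ≤ x) (hxm : x ≤ m) :
    ((x : ℝ) ^ (1 - γ) - ((m : ℝ) + 1) ^ (1 - γ)) / (γ - 1)
      ≤ ∑ k ∈ Finset.Icc x m, (k : ℝ) ^ (-γ) := by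
  have hγ0 : (0:ℝ) < γ := by linarith
  have hxpos : (0:ℝ) < (x:ℝ) := by exact_mod_cast hx
  have hIcc : Finset.Icc x m = Finset.Ico x (m + 1) := by
    rw [Finset.Ico_add_one_right_eq_Icc]
  have hab : x ≤ m + 1 := by omega
  have hanti : AntitoneOn (fun t : ℝ => t ^ (-γ)) (Set.Icc (x:ℝ) ((m+1 : ℕ):ℝ)) :=
    rpow_neg_antitoneOn hγ0 fun t ht => lt_of_lt_of_le hxpos ht.1
  have hint := AntitoneOn.integral_le_sum_Ico (f := fun t : ℝ => t ^ (-γ))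
    (a := x) (b := m + 1) hab hanti
  have hval : (∫ t in (x:ℝ)..((m+1:ℕ):ℝ), t ^ (-γ))
      = ((x : ℝ) ^ (1 - γ) - ((m : ℝ) + 1) ^ (1 - γ)) / (γ - 1) := by
    have habR : (x:ℝ) ≤ ((m+1:ℕ):ℝ) := by exact_mod_cast hab
    rw [integral_rpow (Or.inr ⟨by intro h; exact absurd (neg_eq_iff_eq_neg.1 h) (by linarith), by
      rw [Set.uIcc_of_le habR]
      intro h0
      exact absurd h0.1 (by linarith)⟩)]
    have h2 : ((m+1:ℕ):ℝ) = (m:ℝ) + 1 := by push_cast; ring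
    rw [h2]
    rw [div_eq_div_iff (by linarith) (by linarith : γ - 1 ≠ 0)]
    have e1 : -γ + 1 = 1 - γ := by ring
    rw [e1]
    ring
  rw [hIcc]
  calc ((x : ℝ) ^ (1 - γ) - ((m : ℝ) + 1) ^ (1 - γ)) / (γ - 1)
      = ∫ t in (x:ℝ)..((m+1:ℕ):ℝ), t ^ (-γ) := hval.symm
    _ ≤ _ := hint

/-- Upper integral bound for the tail sum. -/
lemma tail_upper {γ : ℝ} (hγ : 1 < γ) {x m : ℕ} (hx : 2 ≤ x) (hxm : x ≤ m) :
    ∑ k ∈ Finset.Icc x m, (k : ℝ) ^ (-γ) ≤ ((x : ℝ) - 1) ^ (1 - γ) / (γ - 1) := by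
  have hγ0 : (0:ℝ) < γ := by linarith
  have hx1R : (1:ℝ) ≤ ((x-1:ℕ):ℝ) := by
    have : 1 ≤ x - 1 := by omega
    exact_mod_cast this
  have hre : ∑ k ∈ Finset.Icc x m, (k:ℝ)^(-γ)
      = ∑ i ∈ Finset.Ico (x-1) m, (fun t : ℝ => t ^ (-γ)) ((i+1 : ℕ) : ℝ) := by
    rw [← Finset.Ico_add_one_right_eq_Icc]
    rw [show Finset.Ico x (m+1) = (Finset.Ico (x-1) m).map (addRightEmbedding 1) by
      rw [Finset.map_add_right_Ico]; congr 1 <;> omega]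
    rw [Finset.sum_map]
    rfl
  have hanti : AntitoneOn (fun t : ℝ => t ^ (-γ)) (Set.Icc ((x-1:ℕ):ℝ) ((m:ℕ):ℝ)) :=
    rpow_neg_antitoneOn hγ0 fun t ht => lt_of_lt_of_le (by linarith) ht.1
  have hint := AntitoneOn.sum_le_integral_Ico (f := fun t : ℝ => t ^ (-γ))
    (a := x - 1) (b := m) (by omega) hanti
  have hval : (∫ t in ((x-1:ℕ):ℝ)..((m:ℕ):ℝ), t ^ (-γ))
      = (((x-1:ℕ):ℝ) ^ (1 - γ) - (m : ℝ) ^ (1 - γ)) / (γ - 1) := by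
    have habR : ((x-1:ℕ):ℝ) ≤ ((m:ℕ):ℝ) := by exact_mod_cast (by omega : x - 1 ≤ m)
    rw [integral_rpow (Or.inr ⟨by intro h; exact absurd (neg_eq_iff_eq_neg.1 h) (by linarith), by
      rw [Set.uIcc_of_le habR]
      intro h0
      exact absurd h0.1 (by linarith)⟩)]
    rw [div_eq_div_iff (by linarith) (by linarith : γ - 1 ≠ 0)]
    have e1 : -γ + 1 = 1 - γ := by ring
    rw [e1]
    ring
  have hcast : ((x-1:ℕ):ℝ) = (x:ℝ) - 1 := by
    have : (1:ℕ) ≤ x := by omega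
    push_cast [Nat.cast_sub this]
    ring
  have hmnn : (0:ℝ) ≤ (m:ℝ) ^ (1-γ) := Real.rpow_nonneg (Nat.cast_nonneg m) _
  calc ∑ k ∈ Finset.Icc x m, (k:ℝ)^(-γ)
      = ∑ i ∈ Finset.Ico (x-1) m, (fun t : ℝ => t ^ (-γ)) ((i+1 : ℕ) : ℝ) := hre
    _ ≤ ∫ t in ((x-1:ℕ):ℝ)..((m:ℕ):ℝ), t ^ (-γ) := hint
    _ = (((x-1:ℕ):ℝ) ^ (1 - γ) - (m : ℝ) ^ (1 - γ)) / (γ - 1) := hval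
    _ ≤ ((x:ℝ) - 1) ^ (1 - γ) / (γ - 1) := by
        rw [hcast, div_le_div_iff_of_pos_right (by linarith : (0:ℝ) < γ - 1)]
        linarith

lemma Hgen_eq_range {γ : ℝ} (hγ : 0 < γ) (M : ℕ) :
    Hgen M γ = ∑ t ∈ Finset.range (M+1), (t:ℝ)^(-γ) := by
  rw [Hgen]
  apply Finset.sum_subset
  · intro t ht
    simp only [Finset.mem_Icc] at ht
    simp only [Finset.mem_range]
    omega
  · intro t ht hts
    simp only [Finset.mem_range] at ht
    simp only [Finset.mem_Icc] at hts
    have : t = 0 := by omega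
    subst this
    simp only [Nat.cast_zero]
    exact Real.zero_rpow (neg_ne_zero.2 (ne_of_gt hγ))

lemma Hgen_tendsto {γ : ℝ} (hγ : 1 < γ) :
    Tendsto (fun N : ℕ => Hgen (N-1) γ) atTop (nhds (∑' n : ℕ, (n:ℝ)^(-γ))) := by
  have h := (hsummable hγ).hasSum.tendsto_sum_nat
  have h2 : Tendsto (fun N : ℕ => (N - 1) + 1) atTop atTop :=
    tendsto_atTop_atTop.2 fun b => ⟨b, fun n hn => by omega⟩
  exact (h.comp h2).congr fun N => (Hgen_eq_range (by linarith) (N-1)).symm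

lemma Hgen_le_tsum {γ : ℝ} (hγ : 1 < γ) (M : ℕ) :
    Hgen M γ ≤ ∑' n : ℕ, (n:ℝ)^(-γ) := by
  rw [Hgen_eq_range (by linarith)]
  exact Summable.sum_le_tsum _ (fun i _ => Real.rpow_nonneg (Nat.cast_nonneg i) _) (hsummable hγ)

lemma Hgen_nonneg (M : ℕ) (γ : ℝ) : 0 ≤ Hgen M γ :=
  Finset.sum_nonneg fun i _ => Real.rpow_nonneg (Nat.cast_nonneg i) _

lemma one_le_Hgen {γ : ℝ} (M : ℕ) (hM : 1 ≤ M) : 1 ≤ Hgen M γ := by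
  have h1 : (1:ℕ) ∈ Finset.Icc 1 M := by simp [hM]
  calc (1:ℝ) = ((1:ℕ):ℝ)^(-γ) := by simp
    _ ≤ Hgen M γ :=
      Finset.single_le_sum (fun i _ => Real.rpow_nonneg (Nat.cast_nonneg i) _) h1

lemma le_dhat {γ : ℝ} {N x : ℕ} (h1 : 1 ≤ x) (h2 : x ≤ N - 1)
    (h3 : Hgen (N - 1) γ ≤ (N : ℝ) * ∑ k ∈ Finset.Icc x (N - 1), (k : ℝ) ^ (-γ)) :
    x ≤ dhat N γ :=
  le_csSup ⟨N - 1, fun _ hy => hy.2.1⟩ ⟨h1, h2, h3⟩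

lemma dhat_mem {γ : ℝ} {N : ℕ} (hN : 2 ≤ N) :
    1 ≤ dhat N γ ∧ dhat N γ ≤ N - 1 ∧
      Hgen (N - 1) γ ≤ (N : ℝ) * ∑ k ∈ Finset.Icc (dhat N γ) (N - 1), (k : ℝ) ^ (-γ) := by
  have h1 : (1:ℕ) ∈ {x : ℕ | 1 ≤ x ∧ x ≤ N - 1 ∧
      Hgen (N - 1) γ ≤ (N : ℝ) * ∑ k ∈ Finset.Icc x (N - 1), (k : ℝ) ^ (-γ)} := by
    refine ⟨le_refl 1, by omega, ?_⟩
    have he : ∑ k ∈ Finset.Icc 1 (N-1), (k:ℝ)^(-γ) = Hgen (N-1) γ := rfl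
    rw [he]
    exact le_mul_of_one_le_left (Hgen_nonneg _ _)
      (by exact_mod_cast Nat.one_le_iff_ne_zero.2 (by omega))
  exact Nat.sSup_mem ⟨1, h1⟩ ⟨N - 1, fun _ hy => hy.2.1⟩

lemma rpow_invert {γ : ℝ} (hγ : 1 < γ) {u v : ℝ} (hu : 0 < u) (hv : 0 < v)
    (h : v ≤ u ^ (1 - γ)) : u ≤ v ^ (-(1/(γ-1))) := by
  have hne : γ - 1 ≠ 0 := by intro h'; rw [sub_eq_zero] at h'; exact absurd h'.symm (ne_of_lt hγ)
  have h1 : (u ^ (1-γ)) ^ (-(1/(γ-1))) = u := by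
    rw [← Real.rpow_mul hu.le, show (1-γ) * (-(1/(γ-1))) = 1 by field_simp; ring, Real.rpow_one]
  calc u = (u ^ (1-γ)) ^ (-(1/(γ-1))) := h1.symm
    _ ≤ v ^ (-(1/(γ-1))) :=
      Real.rpow_le_rpow_of_nonpos hv h (neg_nonpos.2 (by
        have hpos : (0:ℝ) < γ - 1 := by linarith
        positivity))

set_option maxHeartbeats 2000000 in
/-- For `γ > 2`, `lim_{N→∞} d̂_N(γ) / N^{1/(γ-1)} = ((γ-1)·ζ(γ))^{-1/(γ-1)}`,
where `ζ` is the Riemann zeta function; in particular `lim_{N→∞} d̂_N(γ)/N = 0`,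
i.e. the expected maximum degree grows sublinearly in `N`. -/
theorem expected_max_degree_sublinear (γ : ℝ) (hγ : 2 < γ) :
    Tendsto (fun N : ℕ => (dhat N γ : ℝ) / (N : ℝ) ^ (1 / (γ - 1))) atTop
      (nhds (((γ - 1) * (riemannZeta γ).re) ^ (-(1 / (γ - 1))))) ∧
    Tendsto (fun N : ℕ => (dhat N γ : ℝ) / N) atTop (nhds 0) := by
  have hγ1 : 1 < γ := by linarith
  have hg1 : (0:ℝ) < γ - 1 := by linarith
  rw [zeta_re_eq hγ1]
  set Z : ℝ := ∑' n : ℕ, (n : ℝ) ^ (-γ) with hZdef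
  set α : ℝ := 1 / (γ - 1) with hαdef
  have hαpos : 0 < α := by rw [hαdef]; positivity
  have hα1 : α < 1 := by rw [hαdef, div_lt_one hg1]; linarith
  have hsum := hsummable hγ1
  have hZ1 : 1 ≤ Z := by
    have h := Summable.le_tsum hsum 1 fun i _ => Real.rpow_nonneg (Nat.cast_nonneg i) _
    simpa using h
  have hZpos : (0:ℝ) < Z := by linarith
  set c : ℝ := ((γ - 1) * Z) ^ (-α) with hcdef
  have hgZpos : (0:ℝ) < (γ-1) * Z := by positivity
  have hcpos : 0 < c := Real.rpow_pos_of_pos hgZpos _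
  have hcpow : c ^ (1 - γ) = (γ - 1) * Z := by
    rw [hcdef, ← Real.rpow_mul hgZpos.le,
      show (-α) * (1 - γ) = 1 by rw [hαdef]; field_simp; ring, Real.rpow_one]
  -- limits of auxiliary sequences
  have hNα : Tendsto (fun N : ℕ => (N:ℝ) ^ α) atTop atTop :=
    (tendsto_rpow_atTop hαpos).comp tendsto_natCast_atTop_atTop
  have hNneg : ∀ β : ℝ, β < 0 → Tendsto (fun N : ℕ => (N:ℝ) ^ β) atTop (nhds 0) := by
    intro β hβ
    have h := (tendsto_rpow_neg_atTop (y := -β) (by linarith)).comp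
      tendsto_natCast_atTop_atTop
    simpa [Function.comp_def] using h
  have hHt : Tendsto (fun N : ℕ => Hgen (N-1) γ) atTop (nhds Z) := Hgen_tendsto hγ1
  -- key lower bound on dhat
  have key_low : ∀ a : ℝ, 0 < a → a < c →
      ∀ᶠ N : ℕ in atTop, a * (N:ℝ)^α ≤ (dhat N γ : ℝ) := by
    intro a ha hac
    set a' : ℝ := (a + c) / 2 with ha'def
    have ha'1 : a < a' := by rw [ha'def]; linarith
    have ha'2 : a' < c := by rw [ha'def]; linarith
    have ha'pos : 0 < a' := by linarith
    have hδ : c ^ (1-γ) < a' ^ (1-γ) := by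
      have := Real.rpow_lt_rpow_of_neg ha'pos ha'2 (by linarith : 1 - γ < 0)
      exact this
    have hE1 : ∀ᶠ N : ℕ in atTop, (a' - a)⁻¹ ≤ (N:ℝ)^α := hNα.eventually_ge_atTop _
    have hE1b : ∀ᶠ N : ℕ in atTop, a⁻¹ ≤ (N:ℝ)^α := hNα.eventually_ge_atTop _
    have hE2 : ∀ᶠ N : ℕ in atTop, (N:ℝ)^(α-1) < (2*a')⁻¹ :=
      (hNneg (α-1) (by linarith)).eventually_lt_const (by positivity)
    have hE3 : ∀ᶠ N : ℕ in atTop, (N:ℝ)^(2-γ) < a'^(1-γ) - c^(1-γ) :=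
      (hNneg (2-γ) (by linarith)).eventually_lt_const (by linarith)
    filter_upwards [hE1, hE1b, hE2, hE3, eventually_ge_atTop 4] with N h1 h1b h2 h3 h4
    have hN1 : 1 ≤ N := by omega
    have hNposR : (0:ℝ) < N := by exact_mod_cast (by omega : 0 < N)
    have hNαpos : (0:ℝ) < (N:ℝ)^α := Real.rpow_pos_of_pos hNposR _
    have h1' : 1 ≤ (a' - a) * (N:ℝ)^α := by
      calc (1:ℝ) = (a'-a) * (a'-a)⁻¹ := (mul_inv_cancel₀ (by linarith)).symm
        _ ≤ (a'-a) * (N:ℝ)^α := by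
            apply mul_le_mul_of_nonneg_left h1 (by linarith)
    have h1b' : 1 ≤ a * (N:ℝ)^α := by
      calc (1:ℝ) = a * a⁻¹ := (mul_inv_cancel₀ (by linarith)).symm
        _ ≤ a * (N:ℝ)^α := by
            apply mul_le_mul_of_nonneg_left h1b (by linarith)
    -- a' * N^α ≤ N / 2
    have h2' : a' * (N:ℝ)^α ≤ (N:ℝ)/2 := by
      have hsplit : (N:ℝ)^α = (N:ℝ)^(α-1) * (N:ℝ) := by
        rw [show α = (α - 1) + 1 by ring, Real.rpow_add hNposR, Real.rpow_one]
        ring_nf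
      rw [hsplit, ← mul_assoc]
      have : a' * (N:ℝ)^(α-1) ≤ 1/2 := by
        have := mul_le_mul_of_nonneg_left h2.le (le_of_lt ha'pos)
        calc a' * (N:ℝ)^(α-1) ≤ a' * (2*a')⁻¹ := this
          _ = 1/2 := by field_simp
      calc a' * (N:ℝ)^(α-1) * (N:ℝ) ≤ 1/2 * (N:ℝ) := by
            apply mul_le_mul_of_nonneg_right this hNposR.le
        _ = (N:ℝ)/2 := by ring
    set x : ℕ := ⌈a * (N:ℝ)^α⌉₊ with hxdef
    have hxge : a * (N:ℝ)^α ≤ (x:ℝ) := Nat.le_ceil _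
    have hx1 : 1 ≤ x := Nat.ceil_pos.2 (by positivity)
    have hxlt : (x:ℝ) < a * (N:ℝ)^α + 1 := Nat.ceil_lt_add_one (by positivity)
    have hxa' : (x:ℝ) ≤ a' * (N:ℝ)^α := by nlinarith [h1']
    have hN4R : (4:ℝ) ≤ (N:ℝ) := by exact_mod_cast h4
    have hxNR : (x:ℝ) ≤ (N:ℝ) - 1 := by linarith
    have hxN : x ≤ N - 1 := by
      have hcast : ((N - 1:ℕ):ℝ) = (N:ℝ) - 1 := by
        push_cast [Nat.cast_sub hN1]; ring
      have : (x:ℝ) ≤ ((N-1:ℕ):ℝ) := by rw [hcast]; exact hxNR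
      exact_mod_cast this
    -- the defining condition holds at x
    have hcond : Hgen (N-1) γ ≤ (N:ℝ) * ∑ k ∈ Finset.Icc x (N-1), (k:ℝ)^(-γ) := by
      have htail := tail_lower hγ1 hx1 hxN
      have hm1 : ((N-1:ℕ):ℝ) + 1 = (N:ℝ) := by
        push_cast [Nat.cast_sub hN1]; ring
      rw [hm1] at htail
      have hxpow : a'^(1-γ) * (N:ℝ)⁻¹ ≤ (x:ℝ)^(1-γ) := by
        have h5 : (a' * (N:ℝ)^α)^(1-γ) ≤ (x:ℝ)^(1-γ) :=
          Real.rpow_le_rpow_of_nonpos (by positivity) hxa' (by linarith)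
        have h6 : (a' * (N:ℝ)^α)^(1-γ) = a'^(1-γ) * (N:ℝ)⁻¹ := by
          rw [Real.mul_rpow ha'pos.le (by positivity), ← Real.rpow_mul hNposR.le,
            show α * (1-γ) = -1 by rw [hαdef]; field_simp; ring, Real.rpow_neg_one]
        linarith
      have hNN : (N:ℝ) * (N:ℝ)^(1-γ) = (N:ℝ)^(2-γ) := by
        rw [show (2-γ) = 1 + (1-γ) by ring, Real.rpow_add hNposR, Real.rpow_one]
      have h7 : a'^(1-γ) ≤ (N:ℝ) * (x:ℝ)^(1-γ) := by
        have h := mul_le_mul_of_nonneg_left hxpow hNposR.le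
        calc a'^(1-γ) = (N:ℝ) * (a'^(1-γ) * (N:ℝ)⁻¹) := by
              field_simp
          _ ≤ (N:ℝ) * (x:ℝ)^(1-γ) := h
      have hmid : Z ≤ (N:ℝ) * (((x:ℝ)^(1-γ) - (N:ℝ)^(1-γ)) / (γ-1)) := by
        rw [mul_div_assoc', le_div_iff₀ hg1]
        have hc3 : (γ-1) * Z = c^(1-γ) := hcpow.symm
        nlinarith [h7, h3, hNN]
      calc Hgen (N-1) γ ≤ Z := Hgen_le_tsum hγ1 _
        _ ≤ (N:ℝ) * (((x:ℝ)^(1-γ) - (N:ℝ)^(1-γ)) / (γ-1)) := hmid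
        _ ≤ (N:ℝ) * ∑ k ∈ Finset.Icc x (N-1), (k:ℝ)^(-γ) := by
            apply mul_le_mul_of_nonneg_left htail hNposR.le
    have hmem : x ≤ dhat N γ := le_dhat hx1 hxN hcond
    calc a * (N:ℝ)^α ≤ (x:ℝ) := hxge
      _ ≤ (dhat N γ : ℝ) := by exact_mod_cast hmem
  -- key upper bound on dhat
  have key_up : ∀ b : ℝ, c < b →
      ∀ᶠ N : ℕ in atTop, (dhat N γ : ℝ) ≤ b * (N:ℝ)^α := by
    intro b hb
    set b' : ℝ := (c + b) / 2 with hb'def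
    have hb'1 : c < b' := by rw [hb'def]; linarith
    have hb'2 : b' < b := by rw [hb'def]; linarith
    have hb'pos : 0 < b' := by linarith
    have hF1 : ∀ᶠ N : ℕ in atTop, ((γ-1) * Hgen (N-1) γ) ^ (-α) ≤ b' := by
      have h1 : Tendsto (fun N : ℕ => (γ-1) * Hgen (N-1) γ) atTop (nhds ((γ-1)*Z)) :=
        hHt.const_mul _
      have ht : Tendsto (fun N : ℕ => ((γ-1) * Hgen (N-1) γ) ^ (-α)) atTop (nhds c) := by
        rw [hcdef]
        exact h1.rpow_const (Or.inl hgZpos.ne')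
      exact (ht.eventually_lt_const hb'1).mono fun _ h => h.le
    have hF2 : ∀ᶠ N : ℕ in atTop, (b - b')⁻¹ ≤ (N:ℝ)^α := hNα.eventually_ge_atTop _
    have hF3 : ∀ᶠ N : ℕ in atTop, b⁻¹ ≤ (N:ℝ)^α := hNα.eventually_ge_atTop _
    filter_upwards [hF1, hF2, hF3, eventually_ge_atTop 2] with N h1 h2 h3 hN2
    have hN1 : 1 ≤ N := by omega
    have hNposR : (0:ℝ) < N := by exact_mod_cast (by omega : 0 < N)
    have hNαpos : (0:ℝ) < (N:ℝ)^α := Real.rpow_pos_of_pos hNposR _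
    have hbpos : 0 < b := by linarith
    have h2' : 1 ≤ (b - b') * (N:ℝ)^α := by
      calc (1:ℝ) = (b-b') * (b-b')⁻¹ := (mul_inv_cancel₀ (by linarith)).symm
        _ ≤ (b-b') * (N:ℝ)^α := mul_le_mul_of_nonneg_left h2 (by linarith)
    have h3' : 1 ≤ b * (N:ℝ)^α := by
      calc (1:ℝ) = b * b⁻¹ := (mul_inv_cancel₀ (by linarith)).symm
        _ ≤ b * (N:ℝ)^α := mul_le_mul_of_nonneg_left h3 (by linarith)
    obtain ⟨hd1, hdN, hdcond⟩ := dhat_mem (γ := γ) hN2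
    set x : ℕ := dhat N γ with hxdef
    rcases eq_or_lt_of_le hd1 with heq | hlt
    · rw [← heq]
      simpa using h3'
    · have hx2 : 2 ≤ x := hlt
      have htail := tail_upper hγ1 hx2 hdN
      have hx2R : (2:ℝ) ≤ (x:ℝ) := by exact_mod_cast hx2
      have hHc : Hgen (N-1) γ ≤ (N:ℝ) * (((x:ℝ)-1)^(1-γ)/(γ-1)) :=
        le_trans hdcond (mul_le_mul_of_nonneg_left htail hNposR.le)
      have hH1 : 0 < Hgen (N-1) γ := lt_of_lt_of_le one_pos (one_le_Hgen _ (by omega))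
      have hv : (0:ℝ) < (γ-1) * Hgen (N-1) γ / N := by positivity
      have hvle : (γ-1) * Hgen (N-1) γ / (N:ℝ) ≤ ((x:ℝ)-1)^(1-γ) := by
        rw [div_le_iff₀ hNposR]
        have h := mul_le_mul_of_nonneg_left hHc hg1.le
        calc (γ-1) * Hgen (N-1) γ ≤ (γ-1) * ((N:ℝ) * (((x:ℝ)-1)^(1-γ)/(γ-1))) := h
          _ = ((x:ℝ)-1)^(1-γ) * (N:ℝ) := by field_simp
      have hxib : (x:ℝ) - 1 ≤ ((γ-1) * Hgen (N-1) γ / N) ^ (-α) := by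
        have h := rpow_invert hγ1 (by linarith : (0:ℝ) < (x:ℝ) - 1) hv hvle
        rwa [← hαdef] at h
      have hsplit : ((γ-1) * Hgen (N-1) γ / N) ^ (-α)
          = ((γ-1) * Hgen (N-1) γ) ^ (-α) * (N:ℝ)^α := by
        rw [Real.div_rpow (by positivity) hNposR.le, Real.rpow_neg hNposR.le α,
          div_eq_mul_inv, inv_inv]
      have hfin : (x:ℝ) - 1 ≤ b' * (N:ℝ)^α := by
        rw [hsplit] at hxib
        calc (x:ℝ)-1 ≤ ((γ-1)*Hgen (N-1) γ)^(-α) * (N:ℝ)^α := hxib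
          _ ≤ b' * (N:ℝ)^α := mul_le_mul_of_nonneg_right h1 hNαpos.le
      linarith
  -- assemble part one
  have hpart1 : Tendsto (fun N : ℕ => (dhat N γ : ℝ) / (N : ℝ) ^ α) atTop (nhds c) := by
    rw [Metric.tendsto_atTop]
    intro ε hε
    have hmin : 0 < min ε c := lt_min hε hcpos
    have ha : 0 < c - min ε c / 2 := by
      have := min_le_right ε c
      linarith
    have hac : c - min ε c / 2 < c := by linarith
    have h1 := key_low (c - min ε c / 2) ha hac
    have h2 := key_up (c + ε/2) (by linarith)
    obtain ⟨N₀, hN₀⟩ := eventually_atTop.1 ((h1.and h2).and (eventually_ge_atTop 1))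
    refine ⟨N₀, fun n hn => ?_⟩
    obtain ⟨⟨hl, hu⟩, hn1⟩ := hN₀ n hn
    have hnposR : (0:ℝ) < n := by exact_mod_cast (by omega : 0 < n)
    have hnαpos : (0:ℝ) < (n:ℝ)^α := Real.rpow_pos_of_pos hnposR _
    have hlo : c - min ε c / 2 ≤ (dhat n γ : ℝ) / (n:ℝ)^α := (le_div_iff₀ hnαpos).2 hl
    have hhi : (dhat n γ : ℝ) / (n:ℝ)^α ≤ c + ε/2 := (div_le_iff₀ hnαpos).2 hu
    rw [Real.dist_eq, abs_lt]
    constructor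
    · have := min_le_left ε c
      linarith
    · linarith
  refine ⟨hpart1, ?_⟩
  -- part two
  have h2 : Tendsto (fun N : ℕ => (N:ℝ)^(α-1)) atTop (nhds 0) := hNneg (α-1) (by linarith)
  have h3 := hpart1.mul h2
  rw [mul_zero] at h3
  apply h3.congr'
  filter_upwards [eventually_ge_atTop 1] with N hN1
  have hNposR : (0:ℝ) < N := by exact_mod_cast (by omega : 0 < N)
  have hNα : ((N:ℝ)^α) ≠ 0 := (Real.rpow_pos_of_pos hNposR α).ne'
  have hsplit : (N:ℝ)^(α-1) = (N:ℝ)^α * (N:ℝ)⁻¹ := by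
    rw [show α - 1 = α + (-1) by ring, Real.rpow_add hNposR, Real.rpow_neg_one]
  rw [hsplit]
  field_simp
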